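/- There is an absolute constant C > 0 such that the following holds. Let ε ∈ (0,1], let n ≥ 2 be an integer, let m ≥ 1 be an integer, and let X_1,…,X_m be independent random variables each distributed as the symmetric geometric distribution Geom(e^ε). Then Pr[ |(1/m)·Σ_{i=1}^m X_i| > C·(log n)/ε ] ≤ n^{−4}. -/

import Mathlib

open scoped Classical
open MeasureTheory ProbabilityTheory

/-- The symmetric geometric distribution `Geom(γ)` (as a measure on `ℝ` supported on the
integers): probability mass `((γ−1)/(γ+1))·γ^{−|k|}` at each integer `k`. -/
noncomputable def symGeom (γ : ℝ) : Measure ℝ :=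
  Measure.sum fun k : ℤ =>
    (ENNReal.ofReal ((γ - 1) / (γ + 1) * γ ^ (-|k|))) • Measure.dirac (k : ℝ)

lemma symGeom_lintegral_exp_le (ε l : ℝ) (hε0 : 0 < ε) (hl : |l| ≤ ε / 2) :
    ∫⁻ x, ENNReal.ofReal (Real.exp (l * x)) ∂(symGeom (Real.exp ε)) ≤ ENNReal.ofReal 2 := by
  set γ := Real.exp ε with hγ
  have hγ1 : 1 < γ := by rw [hγ]; exact Real.one_lt_exp_iff.mpr hε0
  set c : ℝ := (γ - 1) / (γ + 1) with hc
  have hc0 : 0 ≤ c := div_nonneg (by linarith) (by linarith)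
  set r : ℝ := Real.exp (-(ε / 2)) with hr
  have hr0 : 0 ≤ r := (Real.exp_pos _).le
  have hr1 : r < 1 := Real.exp_lt_one_iff.mpr (by linarith)
  have hzpow : ∀ n : ℤ, γ ^ n = Real.exp (ε * n) := by
    intro n
    rw [hγ, Real.exp_mul, Real.rpow_intCast]
  set h : ℤ → ℝ := fun k => c * r ^ k.natAbs with hh
  have hterm : ∀ k : ℤ, c * γ ^ (-|k|) * Real.exp (l * k) ≤ h k := by
    intro k
    have h1 : γ ^ (-|k|) * Real.exp (l * k) = Real.exp (l * k - ε * |(k : ℝ)|) := by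
      rw [hzpow, ← Real.exp_add]
      congr 1
      push_cast
      ring
    have h2 : r ^ k.natAbs = Real.exp (-(ε / 2) * |(k : ℝ)|) := by
      rw [hr, ← Real.exp_nat_mul]
      congr 1
      push_cast [Nat.cast_natAbs, Int.cast_abs]
      ring
    show c * γ ^ (-|k|) * Real.exp (l * ↑k) ≤ c * r ^ k.natAbs
    rw [mul_assoc, h1, h2]
    have hle : l * k - ε * |(k : ℝ)| ≤ -(ε / 2) * |(k : ℝ)| := by
      have h3 : l * k ≤ |l| * |(k : ℝ)| := by
        calc l * k ≤ |l * k| := le_abs_self _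
        _ = |l| * |(k : ℝ)| := abs_mul _ _
      nlinarith [abs_nonneg (k : ℝ)]
    exact mul_le_mul_of_nonneg_left (Real.exp_le_exp.mpr hle) hc0
  have hgeo := summable_geometric_of_lt_one hr0 hr1
  have h1 : (fun n : ℕ => h n) = fun n : ℕ => c * r ^ n := by funext n; simp [hh]
  have h2 : (fun n : ℕ => h (-(n+1))) = fun n : ℕ => (c * r) * r ^ n := by
    funext n
    show c * r ^ (-((n:ℤ)+1)).natAbs = (c * r) * r ^ n
    have : (-((n:ℤ)+1)).natAbs = n + 1 := by
      rw [Int.natAbs_neg]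
      exact_mod_cast Int.natAbs_natCast (n+1)
    rw [this, pow_succ]
    ring
  have hsummable : Summable h :=
    Summable.of_nat_of_neg_add_one (by rw [h1]; exact hgeo.mul_left c)
      (by rw [h2]; exact hgeo.mul_left _)
  have htsum : ∑' k : ℤ, h k ≤ 2 := by
    rw [tsum_of_nat_of_neg_add_one (by rw [h1]; exact hgeo.mul_left c)
      (by rw [h2]; exact hgeo.mul_left _), h1, h2,
      tsum_mul_left, tsum_mul_left, tsum_geometric_of_lt_one hr0 hr1]
    have h1r : (0:ℝ) < 1 - r := by linarith
    set u : ℝ := Real.exp (ε / 2) with hu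
    have hu1 : 1 < u := by rw [hu]; exact Real.one_lt_exp_iff.mpr (by linarith)
    have hu0 : (0:ℝ) < u := by linarith
    have hru : r = u⁻¹ := by rw [hr, hu, Real.exp_neg]
    have hγu : γ = u * u := by rw [hγ, hu, ← Real.exp_add]; norm_num
    have key : c * (1 + r) ≤ 2 * (1 - r) := by
      have hc' : c = (u*u-1)/(u*u+1) := by rw [hc, hγu]
      rw [hc', hru, div_mul_eq_mul_div, div_le_iff₀ (by nlinarith : (0:ℝ) < u*u+1)]
      have hdiff : 2 * (1 - u⁻¹) * (u*u+1) - (u*u-1) * (1 + u⁻¹) = (u-1)^3 / u := by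
        field_simp
        ring
      have hpos : 0 ≤ (u-1)^3 / u :=
        div_nonneg (pow_nonneg (sub_nonneg.2 hu1.le) 3) hu0.le
      linarith
    calc c * (1 - r)⁻¹ + c * r * (1 - r)⁻¹ = (c * (1 + r)) * (1 - r)⁻¹ := by ring
    _ ≤ (2 * (1 - r)) * (1 - r)⁻¹ := mul_le_mul_of_nonneg_right key (by positivity)
    _ = 2 := by field_simp
  have hmeas : Measurable fun x : ℝ => ENNReal.ofReal (Real.exp (l * x)) := by fun_prop
  rw [symGeom, lintegral_sum_measure]
  simp_rw [lintegral_smul_measure, lintegral_dirac' _ hmeas]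
  calc (∑' k : ℤ, ENNReal.ofReal (c * γ ^ (-|k|)) * ENNReal.ofReal (Real.exp (l * k)))
      ≤ ∑' k : ℤ, ENNReal.ofReal (h k) := by
        apply ENNReal.tsum_le_tsum
        intro k
        rw [← ENNReal.ofReal_mul (by positivity)]
        exact ENNReal.ofReal_le_ofReal (hterm k)
    _ = ENNReal.ofReal (∑' k : ℤ, h k) := by
        rw [ENNReal.ofReal_tsum_of_nonneg (fun k => by positivity) hsummable]
    _ ≤ ENNReal.ofReal 2 := ENNReal.ofReal_le_ofReal htsum


lemma symGeom_exp_integrable (ε l : ℝ) (hε0 : 0 < ε) (hl : |l| ≤ ε / 2) :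
    MeasureTheory.Integrable (fun x => Real.exp (l * x)) (symGeom (Real.exp ε)) := by
  refine ⟨(by fun_prop : Measurable fun x : ℝ => Real.exp (l * x)).aestronglyMeasurable, ?_⟩
  rw [hasFiniteIntegral_iff_ofReal (ae_of_all _ fun x => (Real.exp_pos _).le)]
  exact lt_of_le_of_lt (symGeom_lintegral_exp_le ε l hε0 hl) ENNReal.ofReal_lt_top

lemma symGeom_integral_exp_le (ε l : ℝ) (hε0 : 0 < ε) (hl : |l| ≤ ε / 2) :
    ∫ x, Real.exp (l * x) ∂(symGeom (Real.exp ε)) ≤ 2 := by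
  rw [integral_eq_lintegral_of_nonneg_ae (ae_of_all _ fun x => (Real.exp_pos _).le)
    ((by fun_prop : Measurable fun x : ℝ => Real.exp (l * x)).aestronglyMeasurable)]
  exact ENNReal.toReal_le_of_le_ofReal (by norm_num) (symGeom_lintegral_exp_le ε l hε0 hl)

/-- **Concentration of the average of symmetric geometric noises.** There is an absolute
constant `C > 0` such that for every `ε ∈ (0,1]`, every `n ≥ 2`, every `m ≥ 1`, and
independent random variables `X_1,…,X_m` each distributed as `Geom(e^ε)`,
`Pr[|(1/m)·Σ_i X_i| > C·(log n)/ε] ≤ n^{−4}`. -/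
theorem symGeom_average_concentration :
    ∃ C : ℝ, 0 < C ∧
    ∀ {Ω : Type} [MeasurableSpace Ω] (μpr : Measure Ω) [IsProbabilityMeasure μpr]
      (ε : ℝ) (_hε0 : 0 < ε) (_hε1 : ε ≤ 1)
      (n m : ℕ) (_hn : 2 ≤ n) (_hm : 1 ≤ m)
      (X : Fin m → Ω → ℝ)
      (_hXmeas : ∀ i, Measurable (X i))
      (_hXindep : iIndepFun X μpr)
      (_hXdist : ∀ i, Measure.map (X i) μpr = symGeom (Real.exp ε)),
      (μpr {ω | C * Real.log n / ε < |(1 / (m : ℝ)) * ∑ i, X i ω|}).toReal ≤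
        (n : ℝ) ^ (-4 : ℝ) := by
  refine ⟨20, by norm_num, ?_⟩
  intro Ω _ μpr _ ε hε0 hε1 n m hn hm X hXmeas hXindep hXdist
  have hn2 : (2:ℝ) ≤ (n:ℝ) := by exact_mod_cast hn
  have hn0 : (0:ℝ) < (n:ℝ) := by linarith
  have hn1 : (1:ℝ) ≤ (n:ℝ) := by linarith
  have hlogn : 0 ≤ Real.log n := Real.log_nonneg hn1
  have hm0 : (0:ℝ) < (m:ℝ) := by exact_mod_cast Nat.lt_of_lt_of_le Nat.zero_lt_one hm
  set t : ℝ := 20 * Real.log n / ε with ht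
  have ht0 : 0 ≤ t := by positivity
  set lam : ℝ := ε / 2 with hlam
  have hlam0 : 0 < lam := by positivity
  have hlamabs : |lam| ≤ ε / 2 := by rw [abs_of_pos hlam0]
  have hnegabs : |(-lam)| ≤ ε / 2 := by rw [abs_neg, abs_of_pos hlam0]
  -- integrability
  have hint : ∀ (l : ℝ), |l| ≤ ε / 2 → ∀ i, Integrable (fun ω => Real.exp (l * X i ω)) μpr := by
    intro l hl i
    have h0 := symGeom_exp_integrable ε l hε0 hl
    rw [← hXdist i] at h0
    exact (integrable_map_measure
      ((by fun_prop : Measurable fun x : ℝ => Real.exp (l * x)).aestronglyMeasurable)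
      (hXmeas i).aemeasurable).mp h0
  -- mgf bound per coordinate
  have hmgf : ∀ (l : ℝ), |l| ≤ ε / 2 → ∀ i, mgf (X i) μpr l ≤ 2 := by
    intro l hl i
    have h0 : mgf (X i) μpr l = ∫ ω, Real.exp (l * X i ω) ∂μpr := rfl
    rw [h0, ← integral_map (hXmeas i).aemeasurable
      ((by fun_prop : Measurable fun x : ℝ => Real.exp (l * x)).aestronglyMeasurable),
      hXdist i]
    exact symGeom_integral_exp_le ε l hε0 hl
  -- mgf of sum bound
  have hintsum : ∀ (l : ℝ), |l| ≤ ε / 2 →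
      Integrable (fun ω => Real.exp (l * (∑ i, X i) ω)) μpr := fun l hl =>
    hXindep.integrable_exp_mul_sum hXmeas (fun i _ => hint l hl i)
  have hprod : ∀ (l : ℝ), |l| ≤ ε / 2 → mgf (∑ i, X i) μpr l ≤ 2 ^ m := by
    intro l hl
    rw [hXindep.mgf_sum hXmeas Finset.univ]
    calc (∏ i, mgf (X i) μpr l) ≤ ∏ _i : Fin m, (2:ℝ) :=
        Finset.prod_le_prod (fun i _ => mgf_nonneg) (fun i _ => hmgf l hl i)
      _ = 2 ^ m := by simp
  -- the numeric base
  have hexp10 : Real.exp (-(10 * Real.log n)) = (n:ℝ) ^ (-10:ℝ) := by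
    rw [Real.rpow_def_of_pos hn0]; ring_nf
  have h6 : (n:ℝ) ^ (-6:ℝ) ≤ 1/4 := by
    rw [show (-6:ℝ) = -((6:ℕ):ℝ) by norm_num, Real.rpow_neg hn0.le, Real.rpow_natCast]
    have h64 : (64:ℝ) ≤ (n:ℝ) ^ (6:ℕ) := by
      calc (64:ℝ) = 2 ^ (6:ℕ) := by norm_num
        _ ≤ (n:ℝ) ^ (6:ℕ) := pow_le_pow_left₀ (by norm_num) hn2 6
    calc ((n:ℝ) ^ (6:ℕ))⁻¹ ≤ (64:ℝ)⁻¹ := by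
          apply inv_anti₀ (by norm_num) h64
      _ ≤ 1/4 := by norm_num
  have h4nn : 0 ≤ (n:ℝ) ^ (-4:ℝ) := Real.rpow_nonneg hn0.le _
  have hsplit : (n:ℝ) ^ (-10:ℝ) = (n:ℝ) ^ (-4:ℝ) * (n:ℝ) ^ (-6:ℝ) := by
    rw [← Real.rpow_add hn0]; norm_num
  have h6nn : 0 ≤ (n:ℝ) ^ (-6:ℝ) := Real.rpow_nonneg hn0.le _
  set b : ℝ := 2 * Real.exp (-(10 * Real.log n)) with hb
  have hb0 : 0 ≤ b := by positivity
  have hble : b ≤ 1/2 * (n:ℝ) ^ (-4:ℝ) := by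
    rw [hb, hexp10, hsplit]
    nlinarith
  have h4le1 : (n:ℝ) ^ (-4:ℝ) ≤ 1 :=
    Real.rpow_le_one_of_one_le_of_nonpos hn1 (by norm_num)
  have hb1 : b ≤ 1 := by linarith
  have hbm : b ^ m ≤ 1/2 * (n:ℝ) ^ (-4:ℝ) := by
    calc b ^ m ≤ b ^ 1 := pow_le_pow_of_le_one hb0 hb1 hm
      _ = b := pow_one b
      _ ≤ _ := hble
  -- key exponent computation
  have hexpkey : Real.exp (-lam * ((m:ℝ) * t)) * 2 ^ m = b ^ m := by
    rw [hb, mul_pow, mul_comm ((2:ℝ)^m)]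
    congr 1
    rw [← Real.exp_nat_mul]
    congr 1
    rw [hlam, ht]
    field_simp
    ring
  -- upper tail
  have hA : (μpr {ω | (m:ℝ) * t ≤ (∑ i, X i) ω}).toReal ≤ 1/2 * (n:ℝ) ^ (-4:ℝ) := by
    calc (μpr {ω | (m:ℝ) * t ≤ (∑ i, X i) ω}).toReal
        ≤ Real.exp (-lam * ((m:ℝ) * t)) * mgf (∑ i, X i) μpr lam :=
          measure_ge_le_exp_mul_mgf _ hlam0.le (hintsum lam hlamabs)
      _ ≤ Real.exp (-lam * ((m:ℝ) * t)) * 2 ^ m := by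
          exact mul_le_mul_of_nonneg_left (hprod lam hlamabs) (Real.exp_pos _).le
      _ = b ^ m := hexpkey
      _ ≤ _ := hbm
  -- lower tail
  have hB : (μpr {ω | (∑ i, X i) ω ≤ -((m:ℝ) * t)}).toReal ≤ 1/2 * (n:ℝ) ^ (-4:ℝ) := by
    calc (μpr {ω | (∑ i, X i) ω ≤ -((m:ℝ) * t)}).toReal
        ≤ Real.exp (-(-lam) * (-((m:ℝ) * t))) * mgf (∑ i, X i) μpr (-lam) :=
          measure_le_le_exp_mul_mgf _ (neg_nonpos.mpr hlam0.le) (hintsum (-lam) hnegabs)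
      _ = Real.exp (-lam * ((m:ℝ) * t)) * mgf (∑ i, X i) μpr (-lam) := by ring_nf
      _ ≤ Real.exp (-lam * ((m:ℝ) * t)) * 2 ^ m := by
          exact mul_le_mul_of_nonneg_left (hprod (-lam) hnegabs) (Real.exp_pos _).le
      _ = b ^ m := hexpkey
      _ ≤ _ := hbm
  -- combine
  have hsub : {ω | 20 * Real.log n / ε < |(1 / (m : ℝ)) * ∑ i, X i ω|} ⊆
      {ω | (m:ℝ) * t ≤ (∑ i, X i) ω} ∪ {ω | (∑ i, X i) ω ≤ -((m:ℝ) * t)} := by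
    intro ω hω
    simp only [Set.mem_setOf_eq] at hω
    have hS : (∑ i, X i) ω = ∑ i, X i ω := by simp [Finset.sum_apply]
    have habs : |(1 / (m : ℝ)) * ∑ i, X i ω| = (1 / (m:ℝ)) * |∑ i, X i ω| := by
      rw [abs_mul, abs_of_pos (by positivity : (0:ℝ) < 1 / (m:ℝ))]
    rw [habs] at hω
    have hmt : (m:ℝ) * t < |∑ i, X i ω| := by
      calc (m:ℝ) * t = (m:ℝ) * (20 * Real.log n / ε) := by rw [ht]
        _ < (m:ℝ) * (1 / (m:ℝ) * |∑ i, X i ω|) := mul_lt_mul_of_pos_left hω hm0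
        _ = |∑ i, X i ω| := by field_simp
    rcases lt_abs.mp hmt with h | h
    · left; simp only [Set.mem_setOf_eq, hS]; linarith
    · right; simp only [Set.mem_setOf_eq, hS]; linarith
  calc (μpr {ω | 20 * Real.log n / ε < |(1 / (m : ℝ)) * ∑ i, X i ω|}).toReal
      ≤ (μpr ({ω | (m:ℝ) * t ≤ (∑ i, X i) ω} ∪ {ω | (∑ i, X i) ω ≤ -((m:ℝ) * t)})).toReal :=
        ENNReal.toReal_mono (measure_ne_top _ _) (measure_mono hsub)
    _ ≤ (μpr {ω | (m:ℝ) * t ≤ (∑ i, X i) ω} + μpr {ω | (∑ i, X i) ω ≤ -((m:ℝ) * t)}).toReal :=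
        ENNReal.toReal_mono (ENNReal.add_ne_top.mpr ⟨measure_ne_top _ _, measure_ne_top _ _⟩)
          (measure_union_le _ _)
    _ = (μpr {ω | (m:ℝ) * t ≤ (∑ i, X i) ω}).toReal
        + (μpr {ω | (∑ i, X i) ω ≤ -((m:ℝ) * t)}).toReal :=
        ENNReal.toReal_add (measure_ne_top _ _) (measure_ne_top _ _)
    _ ≤ 1/2 * (n:ℝ) ^ (-4:ℝ) + 1/2 * (n:ℝ) ^ (-4:ℝ) := add_le_add hA hB
    _ = (n:ℝ) ^ (-4:ℝ) := by ring
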